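/- Let L_w = L + L̂ ε be the dual Laplacian of a connected dual number weighted graph on n vertices, with L_w† = L† - L† L̂ L† ε. Then I - L_w L_w† = I - L_w† L_w = (1/n) J. -/

import Mathlib

open Matrix

/-- The dual matrix `A_s + A_d ε` built from its standard and infinitesimal parts. -/
def dm {m n : Type*} (A B : Matrix m n ℝ) : Matrix m n (DualNumber ℝ) :=
  Matrix.of fun i j => TrivSqZeroExt.inl (A i j) + TrivSqZeroExt.inr (B i j)

lemma dm_mul {n : Type*} [Fintype n] (A B C D : Matrix n n ℝ) :
    dm A B * dm C D = dm (A * C) (A * D + B * C) := by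
  ext i j <;>
    simp [dm, Matrix.mul_apply, TrivSqZeroExt.fst_sum, TrivSqZeroExt.snd_sum,
      TrivSqZeroExt.fst_mul, TrivSqZeroExt.snd_mul, Finset.sum_add_distrib, mul_comm]

lemma compl_eq {n : ℕ} (hn : 0 < n) (G : SimpleGraph (Fin n)) [DecidableRel G.Adj]
    (hG : G.Connected) (M : Matrix (Fin n) (Fin n) ℝ)
    (hLM : G.lapMatrix ℝ * (1 - M) = 0)
    (hsum : (fun _ => (1 : ℝ)) ᵥ* M = 0) :
    (1 : Matrix (Fin n) (Fin n) ℝ) - M = (n : ℝ)⁻¹ • Matrix.of (fun _ _ => (1 : ℝ)) := by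
  ext i j
  set x : Fin n → ℝ := fun i => ((1 : Matrix (Fin n) (Fin n) ℝ) - M) i j with hx
  have hker : Matrix.toLin' (G.lapMatrix ℝ) x = 0 := by
    rw [Matrix.toLin'_apply]
    ext i'
    have := congrFun (congrFun hLM i') j
    simpa [hx, Matrix.mul_apply, Matrix.mulVec, dotProduct] using this
  have hconst : ∀ a b : Fin n, x a = x b := by
    intro a b
    exact (G.lapMatrix_mulVec_eq_zero_iff_forall_reachable.mp
      (by rwa [Matrix.toLin'_apply] at hker)) a b
      (hG.preconnected a b)
  have hsum1 : ∑ i, x i = 1 := by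
    have h0 := congrFun hsum j
    simp only [Matrix.vecMul, dotProduct, one_mul, Pi.zero_apply] at h0
    simp [hx, Matrix.sub_apply, Matrix.one_apply, Finset.sum_sub_distrib, h0,
      Finset.sum_ite_eq, Finset.mem_univ]
  have hxi : (n : ℝ) * x i = 1 := by
    calc (n : ℝ) * x i = ∑ _k : Fin n, x i := by simp [mul_comm]
    _ = ∑ k, x k := Finset.sum_congr rfl fun k _ => hconst i k
    _ = 1 := hsum1
  have : x i = (n : ℝ)⁻¹ := by
    field_simp at hxi ⊢
    linarith
  simpa [hx] using this

lemma one_sub_dm {n : Type*} [Fintype n] [DecidableEq n] (A B : Matrix n n ℝ) :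
    (1 : Matrix n n (DualNumber ℝ)) - dm A B = dm (1 - A) (-B) := by
  ext i j <;>
    simp [dm, Matrix.one_apply, apply_ite]

lemma dm_smul_J {m k : Type*} (c : ℝ) :
    dm (c • Matrix.of (fun (_ : m) (_ : k) => (1 : ℝ))) 0 =
      c • Matrix.of (fun (_ : m) (_ : k) => (1 : DualNumber ℝ)) := by
  ext i j <;> simp [dm, TrivSqZeroExt.fst_one, TrivSqZeroExt.snd_one]

/-- For the dual Laplacian `L_w = L + L̂ ε` of a connected dual number weighted graph with
dual Moore-Penrose inverse `L_w† = L† - L† L̂ L† ε`, one has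
`I - L_w L_w† = I - L_w† L_w = (1/n) J`. -/
theorem dual_laplacian_mp_complement {n : ℕ} (hn : 0 < n)
    (G : SimpleGraph (Fin n)) [DecidableRel G.Adj] (hG : G.Connected)
    (Lhat : Matrix (Fin n) (Fin n) ℝ) (hsym : Lhatᵀ = Lhat)
    (hrow : Lhat *ᵥ (fun _ => (1 : ℝ)) = 0)
    (hcol : (fun _ => (1 : ℝ)) ᵥ* Lhat = 0)
    (Ld : Matrix (Fin n) (Fin n) ℝ)
    (h1 : G.lapMatrix ℝ * Ld * G.lapMatrix ℝ = G.lapMatrix ℝ)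
    (h2 : Ld * G.lapMatrix ℝ * Ld = Ld)
    (h3 : (G.lapMatrix ℝ * Ld)ᵀ = G.lapMatrix ℝ * Ld)
    (h4 : (Ld * G.lapMatrix ℝ)ᵀ = Ld * G.lapMatrix ℝ) :
    (1 : Matrix (Fin n) (Fin n) (DualNumber ℝ))
        - dm (G.lapMatrix ℝ) Lhat * dm Ld (-(Ld * Lhat * Ld))
      = (n : ℝ)⁻¹ • Matrix.of (fun _ _ => (1 : DualNumber ℝ)) ∧
    (1 : Matrix (Fin n) (Fin n) (DualNumber ℝ))
        - dm Ld (-(Ld * Lhat * Ld)) * dm (G.lapMatrix ℝ) Lhat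
      = (n : ℝ)⁻¹ • Matrix.of (fun _ _ => (1 : DualNumber ℝ)) := by
  set L := G.lapMatrix ℝ with hL
  set J : Matrix (Fin n) (Fin n) ℝ := Matrix.of (fun _ _ => (1 : ℝ)) with hJdef
  have hLsym : Lᵀ = L := G.isSymm_lapMatrix ℝ
  have hL1 : L *ᵥ (fun _ => (1 : ℝ)) = 0 := G.lapMatrix_mulVec_const_eq_zero
  have h1L : (fun _ => (1 : ℝ)) ᵥ* L = 0 := by
    rw [← hLsym, Matrix.vecMul_transpose, hL1]
  have hJL : J * Lhat = 0 := by
    ext i j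
    have := congrFun hcol j
    simpa [hJdef, Matrix.mul_apply, Matrix.vecMul, dotProduct] using this
  have hLJ : Lhat * J = 0 := by
    ext i j
    have := congrFun hrow i
    simpa [hJdef, Matrix.mul_apply, Matrix.mulVec, dotProduct] using this
  have hLLLd : L * (L * Ld) = L := by
    have := congrArg Matrix.transpose h1
    rwa [Matrix.transpose_mul, h3, hLsym] at this
  have hQ : (1 : Matrix (Fin n) (Fin n) ℝ) - L * Ld = (n : ℝ)⁻¹ • J := by
    apply compl_eq hn G hG
    · rw [Matrix.mul_sub, mul_one, hLLLd, sub_self]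
    · rw [← Matrix.vecMul_vecMul, h1L, Matrix.zero_vecMul]
  have hP : (1 : Matrix (Fin n) (Fin n) ℝ) - Ld * L = (n : ℝ)⁻¹ • J := by
    apply compl_eq hn G hG
    · rw [Matrix.mul_sub, mul_one, ← Matrix.mul_assoc, h1, sub_self]
    · have h5 : (Ld * L)ᵀ *ᵥ (fun _ => (1 : ℝ)) = 0 := by
        rw [h4, ← Matrix.mulVec_mulVec, hL1, Matrix.mulVec_zero]
      rw [← Matrix.mulVec_transpose]; exact h5
  have hQ' : L * Ld = 1 - (n : ℝ)⁻¹ • J := by rw [← hQ, sub_sub_cancel]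
  have hP' : Ld * L = 1 - (n : ℝ)⁻¹ • J := by rw [← hP, sub_sub_cancel]
  have hY1 : L * -(Ld * Lhat * Ld) + Lhat * Ld = 0 := by
    have key : L * (Ld * Lhat * Ld) = Lhat * Ld := by
      calc L * (Ld * Lhat * Ld) = L * Ld * Lhat * Ld := by noncomm_ring
      _ = (1 - (n : ℝ)⁻¹ • J) * Lhat * Ld := by rw [hQ']
      _ = Lhat * Ld := by
            rw [Matrix.sub_mul, Matrix.smul_mul, hJL, smul_zero, one_mul, sub_zero]
    rw [mul_neg, key, neg_add_cancel]
  have hY2 : Ld * Lhat + -(Ld * Lhat * Ld) * L = 0 := by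
    have key : Ld * Lhat * Ld * L = Ld * Lhat := by
      calc Ld * Lhat * Ld * L = Ld * Lhat * (Ld * L) := by rw [Matrix.mul_assoc]
      _ = Ld * Lhat * (1 - (n : ℝ)⁻¹ • J) := by rw [hP']
      _ = Ld * Lhat := by
            rw [Matrix.mul_sub, mul_one, Matrix.mul_smul, Matrix.mul_assoc Ld Lhat J,
              hLJ, Matrix.mul_zero, smul_zero, sub_zero]
    rw [neg_mul, key, add_neg_cancel]
  constructor
  · rw [dm_mul, one_sub_dm, hQ, ← dm_smul_J]
    congr 1
    rw [hY1, neg_zero]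
  · rw [dm_mul, one_sub_dm, hP, ← dm_smul_J]
    congr 1
    rw [hY2, neg_zero]
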